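/- arXiv:1207.2225 — 2 statements merged into one kernel-verified Lean document; each statement's English description precedes it below -/
import Mathlib

section
/- Let c ≥ 2 be an integer, and let A and B be modules over ℤ[1/c] (the localization of ℤ away from c; equivalently, abelian groups on which multiplication by c is bijective). Let k be a natural number, let α : A → A be the map α(x) = c^k • x, and let β : B → B be an additive endomorphism that is locally nilpotent, i.e., for every x ∈ B there exists l ∈ ℕ with β^l(x) = 0. Then every additive homomorphism g : B → A satisfying g ∘ β = α ∘ g is the zero homomorphism. -/
/-- If `A` and `B` are modules over `ℤ[1/c]` (`c ≥ 2`), `α : A → A` is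
multiplication by `c^k`, and `β : B → B` is a locally nilpotent additive endomorphism,
then every additive homomorphism `g : B → A` with `g ∘ β = α ∘ g` is zero. -/
theorem stmt_1 (c : ℤ) (hc : 2 ≤ c) (A B : Type*) [AddCommGroup A] [AddCommGroup B]
    [Module (Localization.Away c) A] [Module (Localization.Away c) B]
    (k : ℕ) (α : A →+ A) (hα : ∀ x : A, α x = c ^ k • x)
    (β : B →+ B) (hβ : ∀ x : B, ∃ l : ℕ, (⇑β)^[l] x = 0)
    (g : B →+ A) (hg : ∀ x : B, g (β x) = α (g x)) :
    g = 0 := by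
  ext x
  obtain ⟨l, hl⟩ := hβ x
  have key : ∀ l : ℕ, ∀ y : B, g ((⇑β)^[l] y) = (c ^ (k * l)) • g y := by
    intro l
    induction l with
    | zero => intro y; simp
    | succ n ih =>
      intro y
      rw [Function.iterate_succ_apply, ih (β y), hg, hα, smul_smul, ← pow_add]
      ring_nf
  have h0 : (c ^ (k * l)) • g x = 0 := by
    rw [← key l x, hl, map_zero]
  have hu : IsUnit ((algebraMap ℤ (Localization.Away c)) c) :=
    IsLocalization.Away.algebraMap_isUnit c
  have hu' : IsUnit (((c : ℤ) : Localization.Away c) ^ (k * l)) := by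
    simpa using hu.pow (k * l)
  have h1 : (((c : ℤ) : Localization.Away c) ^ (k * l)) • g x = 0 := by
    rw [← Int.cast_pow, Int.cast_smul_eq_zsmul]
    exact h0
  simp only [AddMonoidHom.zero_apply]
  obtain ⟨u, hu2⟩ := hu'
  have h2 : u⁻¹ • (((c : ℤ) : Localization.Away c) ^ (k * l)) • g x = g x := by
    rw [← hu2, ← Units.smul_def]; exact inv_smul_smul u (g x)
  rw [← h2, h1, smul_zero]
end

section
/- Let m ≥ 1 and a ≥ 0 be natural numbers, let G be an abelian group, and let z ∈ G be an element such that (c^a · (c^m − 1)) • z = 0 for every integer c ≥ 2. Then ((2^m − 1) · (3^m − 1)) • z = 0. -/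
/-- If `z` in an abelian group satisfies `(c^a (c^m − 1)) • z = 0` for every
integer `c ≥ 2` (with `m ≥ 1`), then `((2^m − 1)(3^m − 1)) • z = 0`. -/
theorem stmt_7 (m a : ℕ) (hm : 1 ≤ m) (G : Type*) [AddCommGroup G] (z : G)
    (h : ∀ c : ℤ, 2 ≤ c → (c ^ a * (c ^ m - 1)) • z = 0) :
    (((2 : ℤ) ^ m - 1) * ((3 : ℤ) ^ m - 1)) • z = 0 := by
  have h2 := h 2 (by norm_num)
  have h3 := h 3 (by norm_num)
  have hcop : IsCoprime ((2:ℤ)^a) ((3:ℤ)^a) := by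
    apply IsCoprime.pow
    exact Int.isCoprime_iff_gcd_eq_one.mpr rfl
  obtain ⟨u, v, huv⟩ := hcop
  calc (((2 : ℤ) ^ m - 1) * ((3 : ℤ) ^ m - 1)) • z
      = ((u * 2^a + v * 3^a) * (((2:ℤ)^m - 1) * ((3:ℤ)^m - 1))) • z := by rw [huv, one_mul]
    _ = (u * (3^m - 1)) • ((2:ℤ)^a * (2^m - 1)) • z
        + (v * (2^m - 1)) • ((3:ℤ)^a * (3^m - 1)) • z := by
        rw [smul_smul, smul_smul, ← add_smul]; ring_nf
    _ = 0 := by rw [h2, h3, smul_zero, smul_zero, add_zero]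
end
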